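/- (Maschke-type criterion) Let H be a finite-dimensional Hopf algebra over a field k of characteristic zero, with left integral μ ∈ H. Then H is semisimple if and only if ε(μ) ≠ 0. -/

import Mathlib

open Coalgebra HopfAlgebra TensorProduct LinearMap

section
variable {k H : Type*} [CommRing k] [Ring H] [HopfAlgebra k H]

lemma aux_sum_counit_smul {a : H} {ι : Type*} (r : Repr k a ι) :
    ∑ i ∈ r.index, counit (R := k) (r.left i) • r.right i = a := by
  have h := sum_counit_tmul_eq r
  apply_fun (TensorProduct.lid k H) at h
  simp only [map_sum, TensorProduct.lid_tmul, one_smul] at h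
  simpa using h

lemma aux_sum_smul_counit {a : H} {ι : Type*} (r : Repr k a ι) :
    ∑ i ∈ r.index, counit (R := k) (r.right i) • r.left i = a := by
  have h := sum_tmul_counit_eq r
  apply_fun (TensorProduct.rid k H) at h
  simp only [map_sum, TensorProduct.rid_tmul, one_smul] at h
  simpa using h

lemma comul_mul_repr {a b : H} {ι κ : Type*} (ra : Repr k a ι) (rb : Repr k b κ) :
    Coalgebra.comul (R := k) (a * b)
      = ∑ p ∈ ra.index, ∑ q ∈ rb.index,
          (ra.left p * rb.left q) ⊗ₜ[k] (ra.right p * rb.right q) := by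
  rw [Bialgebra.comul_mul, ← ra.eq, ← rb.eq, Finset.sum_mul_sum]
  simp [Algebra.TensorProduct.tmul_mul_tmul]

lemma sum_antipode_mul_mul {a b : H} {ι κ : Type*} (ra : Repr k a ι) (rb : Repr k b κ) :
    ∑ p ∈ ra.index, ∑ q ∈ rb.index,
      antipode (R := k) (ra.left p * rb.left q) * (ra.right p * rb.right q)
      = (counit (R := k) a * counit (R := k) b) • (1 : H) := by
  have h := congrArg (fun t => LinearMap.mul' k H ((antipode (R := k)).rTensor H t))
    (comul_mul_repr ra rb)
  simp only [map_sum, rTensor_tmul, mul'_apply, mul_antipode_rTensor_comul_apply] at h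
  rw [← h, Algebra.smul_def, mul_one, Bialgebra.counit_mul, map_mul]
lemma antipode_mul_rev (a b : H) :
    antipode (R := k) (a * b) = antipode (R := k) b * antipode (R := k) a := by
  set S : H →ₗ[k] H := antipode (R := k) with hS
  set ra := ℛ k a with hra
  set rb := ℛ k b with hrb
  set rA : ∀ i, Repr k (ra.left i) (H × H) := fun i => ℛ k (ra.left i) with hrA
  set rB : ∀ j, Repr k (rb.left j) (H × H) := fun j => ℛ k (rb.left j) with hrB
  set rA' : ∀ i, Repr k (ra.right i) (H × H) := fun i => ℛ k (ra.right i) with hrA'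
  set rB' : ∀ j, Repr k (rb.right j) (H × H) := fun j => ℛ k (rb.right j) with hrB'
  set M : H := ∑ i ∈ ra.index, ∑ j ∈ rb.index, ∑ p ∈ (rA i).index, ∑ q ∈ (rB j).index,
      S ((rA i).left p * (rB j).left q) * ((rA i).right p * (rB j).right q)
        * (S (rb.right j) * S (ra.right i)) with hM
  have hb' : ∑ j ∈ rb.index, counit (R := k) (rb.left j) • S (rb.right j) = S b := by
    conv_rhs => rw [← aux_sum_counit_smul rb]
    rw [map_sum]; simp
  have ha' : ∑ i ∈ ra.index, counit (R := k) (ra.left i) • S (ra.right i) = S a := by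
    conv_rhs => rw [← aux_sum_counit_smul ra]
    rw [map_sum]; simp
  have claim1 : M = S b * S a := by
    calc M = ∑ i ∈ ra.index, ∑ j ∈ rb.index,
        ((counit (R := k) (ra.left i) * counit (R := k) (rb.left j)) • (1 : H))
          * (S (rb.right j) * S (ra.right i)) := by
          rw [hM]
          refine Finset.sum_congr rfl fun i hi => Finset.sum_congr rfl fun j hj => ?_
          rw [← sum_antipode_mul_mul (rA i) (rB j)]
          simp only [Finset.sum_mul, ← hS]
      _ = S b * S a := by
          rw [← ha', ← hb', Finset.sum_mul_sum, Finset.sum_comm]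
          refine Finset.sum_congr rfl fun j _ => Finset.sum_congr rfl fun i _ => ?_
          rw [smul_mul_assoc, one_mul, smul_mul_assoc, mul_smul_comm, smul_smul,
            mul_comm (counit (R := k) (rb.left j)) (counit (R := k) (ra.left i)), mul_smul]
  have hb3 := sum_tmul_tmul_eq rb rB rB'
  have ha3 := sum_tmul_tmul_eq ra rA rA'
  have stepa : ∀ i p, ∑ j ∈ rb.index, ∑ q ∈ (rB j).index,
      S ((rA i).left p * (rB j).left q)
        * ((rA i).right p * ((rB j).right q * (S (rb.right j) * S (ra.right i))))
      = S ((rA i).left p * b) * ((rA i).right p * S (ra.right i)) := by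
    intro i p
    have h := congrArg (fun t => (LinearMap.mul' k H ∘ₗ
        TensorProduct.map (S ∘ₗ LinearMap.mulLeft k ((rA i).left p))
          (LinearMap.mulLeft k ((rA i).right p) ∘ₗ LinearMap.mul' k H ∘ₗ
            TensorProduct.map LinearMap.id (LinearMap.mulRight k (S (ra.right i)) ∘ₗ S))) t) hb3
    simp only [map_sum, comp_apply, TensorProduct.map_tmul, mul'_apply, mulLeft_apply,
      mulRight_apply, id_coe, id_eq] at h
    rw [h]
    have inner : ∀ j, ∑ s ∈ (rB' j).index,
        S ((rA i).left p * rb.left j)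
          * ((rA i).right p * ((rB' j).left s * (S ((rB' j).right s) * S (ra.right i))))
        = counit (R := k) (rb.right j)
            • (S ((rA i).left p * rb.left j) * ((rA i).right p * S (ra.right i))) := by
      intro j
      calc ∑ s ∈ (rB' j).index,
          S ((rA i).left p * rb.left j)
            * ((rA i).right p * ((rB' j).left s * (S ((rB' j).right s) * S (ra.right i))))
          = S ((rA i).left p * rb.left j) * ((rA i).right p *
              ((∑ s ∈ (rB' j).index, (rB' j).left s * S ((rB' j).right s)) * S (ra.right i))) := by
            rw [Finset.sum_mul, Finset.mul_sum, Finset.mul_sum]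
            refine Finset.sum_congr rfl fun s _ => ?_
            rw [mul_assoc ((rB' j).left s) (S ((rB' j).right s)) (S (ra.right i))]
        _ = _ := by
            rw [sum_mul_antipode_eq_smul (R := k) (rB' j), smul_mul_assoc, one_mul,
              mul_smul_comm, mul_smul_comm]
    rw [Finset.sum_congr rfl fun j _ => inner j]
    conv_rhs => rw [← aux_sum_smul_counit rb]
    rw [Finset.mul_sum, map_sum, Finset.sum_mul]
    refine Finset.sum_congr rfl fun j _ => ?_
    rw [mul_smul_comm, map_smul, smul_mul_assoc]
  have stepb : ∑ i ∈ ra.index, ∑ p ∈ (rA i).index,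
      S ((rA i).left p * b) * ((rA i).right p * S (ra.right i)) = S (a * b) := by
    have h := congrArg (fun t => (LinearMap.mul' k H ∘ₗ
        TensorProduct.map (S ∘ₗ LinearMap.mulRight k b)
          (LinearMap.mul' k H ∘ₗ TensorProduct.map LinearMap.id S)) t) ha3
    simp only [map_sum, comp_apply, TensorProduct.map_tmul, mul'_apply, mulLeft_apply,
      mulRight_apply, id_coe, id_eq] at h
    rw [h]
    have inner : ∀ i, ∑ s ∈ (rA' i).index,
        S (ra.left i * b) * ((rA' i).left s * S ((rA' i).right s))
        = counit (R := k) (ra.right i) • S (ra.left i * b) := by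
      intro i
      rw [← Finset.mul_sum, sum_mul_antipode_eq_smul (R := k) (rA' i), mul_smul_comm, mul_one]
    rw [Finset.sum_congr rfl fun i _ => inner i]
    conv_rhs => rw [← aux_sum_smul_counit ra]
    rw [Finset.sum_mul, map_sum]
    refine Finset.sum_congr rfl fun i _ => ?_
    rw [smul_mul_assoc, map_smul]
  have claim2 : M = S (a * b) := by
    calc M = ∑ i ∈ ra.index, ∑ p ∈ (rA i).index, ∑ j ∈ rb.index, ∑ q ∈ (rB j).index,
        S ((rA i).left p * (rB j).left q)
          * ((rA i).right p * ((rB j).right q * (S (rb.right j) * S (ra.right i)))) := by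
          rw [hM]
          refine Finset.sum_congr rfl fun i _ => ?_
          rw [Finset.sum_comm]
          refine Finset.sum_congr rfl fun p _ => Finset.sum_congr rfl fun j _ =>
            Finset.sum_congr rfl fun q _ => ?_
          simp only [mul_assoc]
      _ = ∑ i ∈ ra.index, ∑ p ∈ (rA i).index,
            S ((rA i).left p * b) * ((rA i).right p * S (ra.right i)) :=
          Finset.sum_congr rfl fun i _ => Finset.sum_congr rfl fun p _ => stepa i p
      _ = S (a * b) := stepb
  rw [← claim2, claim1]

lemma maschke_semisimple {k H : Type*} [Field k] [Ring H] [HopfAlgebra k H] (ν : H)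
    (hν : ∀ h : H, h * ν = Coalgebra.counit (R := k) h • ν)
    (hεν : Coalgebra.counit (R := k) ν = 1) : IsSemisimpleRing H := by
  set S : H →ₗ[k] H := antipode (R := k) with hS
  set rν := ℛ k ν with hrν
  refine { toComplementedLattice := ⟨?_⟩ }
  intro N
  obtain ⟨N'', hc⟩ := Submodule.exists_isCompl (N.restrictScalars k)
  set p : H →ₗ[k] H :=
    (N.restrictScalars k).subtype ∘ₗ (N.restrictScalars k).linearProjOfIsCompl N'' hc with hp
  have hp1 : ∀ x : H, p x ∈ N := fun x => ((N.restrictScalars k).linearProjOfIsCompl N'' hc x).2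
  have hp2 : ∀ x ∈ N, p x = x := by
    intro x hx
    have := Submodule.linearProjOfIsCompl_apply_left hc ⟨x, hx⟩
    simp only [hp, comp_apply, Submodule.subtype_apply]
    exact congrArg Subtype.val this
  set P : H → H := fun m => ∑ i ∈ rν.index, rν.left i * p (S (rν.right i) * m) with hP
  have hPN : ∀ m, P m ∈ N := by
    intro m
    refine Submodule.sum_mem N fun i _ => ?_
    have := N.smul_mem (rν.left i) (hp1 (S (rν.right i) * m))
    rwa [smul_eq_mul] at this
  have hPid : ∀ n ∈ N, P n = n := by
    intro n hn
    have h1 : ∀ i, p (S (rν.right i) * n) = S (rν.right i) * n := by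
      intro i
      refine hp2 _ ?_
      have := N.smul_mem (S (rν.right i)) hn
      rwa [smul_eq_mul] at this
    calc P n = ∑ i ∈ rν.index, rν.left i * S (rν.right i) * n := by
          rw [hP]
          exact Finset.sum_congr rfl fun i _ => by rw [h1 i, mul_assoc]
      _ = (∑ i ∈ rν.index, rν.left i * S (rν.right i)) * n := by rw [Finset.sum_mul]
      _ = n := by
          rw [sum_mul_antipode_eq_smul (R := k) rν, hεν, one_smul, one_mul]
  have Smul : ∀ x y : H, S (x * y) = S y * S x := fun x y => antipode_mul_rev x y
  have hPmul : ∀ (h m : H), P (h * m) = h * P m := by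
    intro h m
    show (∑ i ∈ rν.index, rν.left i * p (S (rν.right i) * (h * m)))
        = h * ∑ i ∈ rν.index, rν.left i * p (S (rν.right i) * m)
    set rh := ℛ k h with hrh
    set rC : ∀ j, Repr k (rh.left j) (H × H) := fun j => ℛ k (rh.left j) with hrC
    set rD : ∀ j, Repr k (rh.right j) (H × H) := fun j => ℛ k (rh.right j) with hrD
    have step1 : ∑ j ∈ rh.index, (rh.left j * ν) ⊗ₜ[k] rh.right j = ν ⊗ₜ[k] h := by
      have e1 : ∀ j, (rh.left j * ν) ⊗ₜ[k] rh.right j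
          = ν ⊗ₜ[k] (Coalgebra.counit (R := k) (rh.left j) • rh.right j) := by
        intro j
        rw [hν, TensorProduct.smul_tmul]
      rw [Finset.sum_congr rfl fun j _ => e1 j, ← TensorProduct.tmul_sum,
        aux_sum_counit_smul rh]
    have step2 := congrArg (fun t => (Coalgebra.comul (R := k)).rTensor H t) step1
    simp only [map_sum, rTensor_tmul] at step2
    have E : (∑ j ∈ rh.index, (∑ l ∈ (rC j).index, ∑ i ∈ rν.index,
          (((rC j).left l * rν.left i) ⊗ₜ[k] ((rC j).right l * rν.right i))) ⊗ₜ[k] rh.right j)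
        = ∑ i ∈ rν.index, (rν.left i ⊗ₜ[k] rν.right i) ⊗ₜ[k] h := by
      calc _ = ∑ j ∈ rh.index, (Coalgebra.comul (R := k) (rh.left j * ν)) ⊗ₜ[k] rh.right j :=
            Finset.sum_congr rfl fun j _ => by rw [comul_mul_repr (rC j) rν]
        _ = (Coalgebra.comul (R := k) ν) ⊗ₜ[k] h := step2
        _ = ∑ i ∈ rν.index, (rν.left i ⊗ₜ[k] rν.right i) ⊗ₜ[k] h := by
            rw [← rν.eq, TensorProduct.sum_tmul]
    simp only [TensorProduct.sum_tmul] at E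
    set G : (H ⊗[k] H) ⊗[k] H →ₗ[k] H :=
      LinearMap.mul' k H ∘ₗ
        TensorProduct.map LinearMap.id
          (p ∘ₗ LinearMap.mul' k H ∘ₗ TensorProduct.map S LinearMap.id) ∘ₗ
        (TensorProduct.assoc k H H H).toLinearMap ∘ₗ
        TensorProduct.map LinearMap.id (LinearMap.mulRight k m) with hG
    have hGt : ∀ x y z : H, G ((x ⊗ₜ[k] y) ⊗ₜ[k] z) = x * p (S y * (z * m)) := by
      intro x y z
      simp only [hG, comp_apply, TensorProduct.map_tmul, LinearEquiv.coe_coe,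
        TensorProduct.assoc_tmul, mul'_apply, mulRight_apply, id_coe, id_eq]
    have step3 := congrArg (fun t => G t) E
    simp only [map_sum, hGt] at step3
    have step4 : ∑ j ∈ rh.index, ∑ l ∈ (rC j).index,
        (rC j).left l ⊗ₜ[k] (S ((rC j).right l) * rh.right j) = h ⊗ₜ[k] (1 : H) := by
      have h3 := sum_tmul_tmul_eq rh rC rD
      have h4 := congrArg (fun t => (TensorProduct.map LinearMap.id
          (LinearMap.mul' k H ∘ₗ TensorProduct.map S LinearMap.id)) t) h3
      simp only [map_sum, TensorProduct.map_tmul, comp_apply, mul'_apply, id_coe, id_eq] at h4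
      rw [h4]
      calc ∑ j ∈ rh.index, ∑ s ∈ (rD j).index,
            rh.left j ⊗ₜ[k] (S ((rD j).left s) * (rD j).right s)
          = ∑ j ∈ rh.index, rh.left j ⊗ₜ[k]
              (∑ s ∈ (rD j).index, S ((rD j).left s) * (rD j).right s) :=
            Finset.sum_congr rfl fun j _ => (TensorProduct.tmul_sum _ _ _).symm
        _ = ∑ j ∈ rh.index, rh.left j ⊗ₜ[k]
              ((Coalgebra.counit (R := k) (rh.right j) • (1 : H))) :=
            Finset.sum_congr rfl fun j _ => by
              rw [sum_antipode_mul_eq_smul (R := k) (rD j)]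
        _ = (∑ j ∈ rh.index, Coalgebra.counit (R := k) (rh.right j) • rh.left j) ⊗ₜ[k] (1 : H) := by
            rw [TensorProduct.sum_tmul]
            exact Finset.sum_congr rfl fun j _ => by
              rw [TensorProduct.tmul_smul, TensorProduct.smul_tmul']
        _ = h ⊗ₜ[k] (1 : H) := by rw [aux_sum_smul_counit rh]
    have step5 : ∀ i, ∑ j ∈ rh.index, ∑ l ∈ (rC j).index,
        ((rC j).left l * rν.left i) * p (S (rν.right i) * ((S ((rC j).right l) * rh.right j) * m))
        = (h * rν.left i) * p (S (rν.right i) * ((1 : H) * m)) := by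
      intro i
      have h5 := congrArg (fun t => (LinearMap.mul' k H ∘ₗ
          TensorProduct.map (LinearMap.mulRight k (rν.left i))
            (p ∘ₗ LinearMap.mulLeft k (S (rν.right i)) ∘ₗ LinearMap.mulRight k m)) t) step4
      simp only [map_sum, comp_apply, TensorProduct.map_tmul, mul'_apply, mulLeft_apply,
        mulRight_apply] at h5
      exact h5
    calc (∑ i ∈ rν.index, rν.left i * p (S (rν.right i) * (h * m)))
        = ∑ j ∈ rh.index, ∑ l ∈ (rC j).index, ∑ i ∈ rν.index,
            ((rC j).left l * rν.left i)
              * p (S ((rC j).right l * rν.right i) * (rh.right j * m)) := step3.symm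
      _ = ∑ j ∈ rh.index, ∑ i ∈ rν.index, ∑ l ∈ (rC j).index,
            ((rC j).left l * rν.left i)
              * p (S ((rC j).right l * rν.right i) * (rh.right j * m)) :=
          Finset.sum_congr rfl fun j _ => Finset.sum_comm
      _ = ∑ i ∈ rν.index, ∑ j ∈ rh.index, ∑ l ∈ (rC j).index,
            ((rC j).left l * rν.left i)
              * p (S ((rC j).right l * rν.right i) * (rh.right j * m)) :=
          Finset.sum_comm
      _ = ∑ i ∈ rν.index, ∑ j ∈ rh.index, ∑ l ∈ (rC j).index,
            ((rC j).left l * rν.left i)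
              * p (S (rν.right i) * ((S ((rC j).right l) * rh.right j) * m)) := by
          refine Finset.sum_congr rfl fun i _ => Finset.sum_congr rfl fun j _ =>
            Finset.sum_congr rfl fun l _ => ?_
          rw [Smul]
          simp only [mul_assoc]
      _ = ∑ i ∈ rν.index, (h * rν.left i) * p (S (rν.right i) * ((1 : H) * m)) :=
          Finset.sum_congr rfl fun i _ => step5 i
      _ = h * ∑ i ∈ rν.index, rν.left i * p (S (rν.right i) * m) := by
          rw [Finset.mul_sum]
          exact Finset.sum_congr rfl fun i _ => by rw [one_mul, mul_assoc]
  have hPsub : ∀ x y, P (x - y) = P x - P y := by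
    intro x y
    simp only [hP, mul_sub, map_sub, sub_mul, Finset.sum_sub_distrib]
  set K : Submodule H H :=
    { carrier := {m | P m = 0}
      add_mem' := by
        intro x y hx hy
        have : P (x + y) = P x + P y := by
          simp only [hP, mul_add, map_add, add_mul, Finset.sum_add_distrib]
        simp only [Set.mem_setOf_eq] at *
        rw [this, hx, hy, add_zero]
      zero_mem' := by
        simp only [Set.mem_setOf_eq, hP]
        simp
      smul_mem' := by
        intro c x hx
        simp only [Set.mem_setOf_eq] at *
        rw [smul_eq_mul, hPmul, hx, mul_zero] } with hK
  refine ⟨K, ?_, ?_⟩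
  · rw [disjoint_iff]
    rw [eq_bot_iff]
    intro x hx
    obtain ⟨hxN, hxK⟩ := Submodule.mem_inf.mp hx
    have : P x = 0 := hxK
    have hx0 : x = 0 := by rw [← hPid x hxN, this]
    simp [hx0]
  · rw [codisjoint_iff, eq_top_iff]
    intro m _
    refine Submodule.mem_sup.mpr ⟨P m, hPN m, m - P m, ?_, by abel⟩
    show P (m - P m) = 0
    rw [hPsub, hPid (P m) (hPN m), sub_self]

end

/-- Maschke-type criterion: a finite-dimensional Hopf algebra `H` over a field of
characteristic zero with a nonzero left integral `μ` is semisimple iff `ε μ ≠ 0`. -/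
theorem hopf_maschke {k H : Type*} [Field k] [CharZero k] [Ring H] [HopfAlgebra k H]
    [FiniteDimensional k H] (μ : H) (hμ : μ ≠ 0)
    (hint : ∀ h : H, h * μ = Coalgebra.counit (R := k) h • μ) :
    IsSemisimpleRing H ↔ Coalgebra.counit (R := k) μ ≠ 0 := by
  constructor
  · intro hss h0
    obtain ⟨J, hJ⟩ := hss.exists_isCompl (Submodule.span H {μ})
    have h1 : (1 : H) ∈ Submodule.span H {μ} ⊔ J := by
      rw [hJ.sup_eq_top]; trivial
    obtain ⟨e, he, f, hf, hef⟩ := Submodule.mem_sup.mp h1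
    obtain ⟨c, hc⟩ := Submodule.mem_span_singleton.mp he
    have hμe : μ * e = 0 := by
      rw [← hc, smul_eq_mul, hint c, mul_smul_comm, hint μ, h0, zero_smul, smul_zero]
    have hμJ : μ ∈ J := by
      have h2 : μ = μ * e + μ * f := by rw [← mul_add, hef, mul_one]
      rw [hμe, zero_add] at h2
      rw [h2, ← smul_eq_mul]
      exact J.smul_mem μ hf
    exact hμ (Submodule.disjoint_def.mp hJ.disjoint μ
      (Submodule.mem_span_singleton_self μ) hμJ)
  · intro hε
    refine maschke_semisimple (k := k) ((Coalgebra.counit (R := k) μ)⁻¹ • μ) ?_ ?_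
    · intro h
      rw [mul_smul_comm, hint h, smul_comm]
    · rw [map_smul, smul_eq_mul, inv_mul_cancel₀ hε]
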